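/- Let T be the closed triangle with vertices a, b, c in ℝ², and let Λ be the lattice spanned by ½(b−a) and ½(c−a). Then every point of the plane not on the boundary of any translate T+z (z ∈ Λ) is covered by the family {T+z : z ∈ Λ} either exactly 1 or exactly 3 times; in particular this family is an odd cover of the plane (every point outside a measure-zero set is covered an odd, uniformly bounded number of times). -/

import Mathlib

lemma aux_ind (u v : ℝ × ℝ) (hd : u.1 * v.2 - u.2 * v.1 ≠ 0) (s t : ℝ)
    (h : s • u + t • v = 0) : s = 0 ∧ t = 0 := by
  have h1 : s * u.1 + t * v.1 = 0 := congrArg Prod.fst h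
  have h2 : s * u.2 + t * v.2 = 0 := congrArg Prod.snd h
  constructor
  · have : s * (u.1 * v.2 - u.2 * v.1) = 0 := by linear_combination v.2 * h1 - v.1 * h2
    exact (mul_eq_zero.mp this).resolve_right hd
  · have : t * (u.1 * v.2 - u.2 * v.1) = 0 := by linear_combination -u.2 * h1 + u.1 * h2
    exact (mul_eq_zero.mp this).resolve_right hd

lemma aux_span (u v : ℝ × ℝ) (hd : u.1 * v.2 - u.2 * v.1 ≠ 0) (w : ℝ × ℝ) :
    ∃ s t : ℝ, w = s • u + t • v := by
  refine ⟨(w.1 * v.2 - w.2 * v.1) / (u.1 * v.2 - u.2 * v.1),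
    (u.1 * w.2 - u.2 * w.1) / (u.1 * v.2 - u.2 * v.1), ?_⟩
  ext <;> simp only [Prod.fst_add, Prod.snd_add, Prod.smul_fst, Prod.smul_snd, smul_eq_mul] <;>
    rw [div_mul_eq_mul_div, div_mul_eq_mul_div, ← add_div, eq_div_iff hd] <;> ring

lemma aux_det (a b c : ℝ × ℝ) (hnd : ¬ Collinear ℝ ({a, b, c} : Set (ℝ × ℝ))) :
    (b - a).1 * (c - a).2 - (b - a).2 * (c - a).1 ≠ 0 := by
  intro hdet
  apply hnd
  rw [collinear_iff_of_mem (Set.mem_insert a {b, c})]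
  simp only [Prod.fst_sub, Prod.snd_sub] at hdet
  by_cases hba : b = a
  · refine ⟨c - a, fun p hp => ?_⟩
    rcases hp with rfl | rfl | rfl
    · exact ⟨0, by simp⟩
    · exact ⟨0, by simp [hba]⟩
    · exact ⟨1, by simp⟩
  · refine ⟨b - a, fun p hp => ?_⟩
    rcases hp with rfl | rfl | hpc
    · exact ⟨0, by simp⟩
    · exact ⟨1, by simp⟩
    subst hpc
    by_cases h1 : b.1 - a.1 ≠ 0
    · refine ⟨(p.1 - a.1) / (b.1 - a.1), ?_⟩
      have key : p - a = ((p.1 - a.1) / (b.1 - a.1)) • (b - a) := by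
        ext
        · simp only [Prod.smul_fst, smul_eq_mul, Prod.fst_sub]; field_simp
        · simp only [Prod.smul_snd, smul_eq_mul, Prod.snd_sub]
          rw [div_mul_eq_mul_div, eq_div_iff h1]
          linear_combination hdet
      rw [vadd_eq_add, ← key]; abel
    · push_neg at h1
      have h2 : b.2 - a.2 ≠ 0 := by
        intro h2
        exact hba (Prod.ext (sub_eq_zero.mp h1) (sub_eq_zero.mp h2))
      refine ⟨(p.2 - a.2) / (b.2 - a.2), ?_⟩
      have key : p - a = ((p.2 - a.2) / (b.2 - a.2)) • (b - a) := by
        ext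
        · simp only [Prod.smul_fst, smul_eq_mul, Prod.fst_sub]
          rw [div_mul_eq_mul_div, eq_div_iff h2]
          linear_combination -hdet
        · simp only [Prod.smul_snd, smul_eq_mul, Prod.snd_sub]; field_simp
      rw [vadd_eq_add, ← key]; abel

lemma aux_T (a b c : ℝ × ℝ) (w : ℝ × ℝ) :
    w ∈ convexHull ℝ ({a, b, c} : Set (ℝ × ℝ)) ↔
      ∃ s t : ℝ, 0 ≤ s ∧ 0 ≤ t ∧ s + t ≤ 1 ∧ w = a + s • (b - a) + t • (c - a) := by
  constructor
  · intro hw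
    have hsub : convexHull ℝ ({a, b, c} : Set (ℝ × ℝ)) ⊆
        {w | ∃ s t : ℝ, 0 ≤ s ∧ 0 ≤ t ∧ s + t ≤ 1 ∧ w = a + s • (b - a) + t • (c - a)} := by
      apply convexHull_min
      · rintro q (rfl | rfl | rfl)
        · exact ⟨0, 0, le_rfl, le_rfl, by norm_num, by module⟩
        · exact ⟨1, 0, zero_le_one, le_rfl, by norm_num, by module⟩
        · exact ⟨0, 1, le_rfl, zero_le_one, by norm_num, by module⟩
      · intro x hx y hy θ₁ θ₂ h₁ h₂ h₁₂
        obtain ⟨s₁, t₁, hs₁, ht₁, hst₁, rfl⟩ := hx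
        obtain ⟨s₂, t₂, hs₂, ht₂, hst₂, rfl⟩ := hy
        refine ⟨θ₁ * s₁ + θ₂ * s₂, θ₁ * t₁ + θ₂ * t₂, by positivity, by positivity, by nlinarith, ?_⟩
        match_scalars <;> linarith
    exact hsub hw
  · rintro ⟨s, t, hs, ht, hst, rfl⟩
    have hC := convex_convexHull ℝ ({a, b, c} : Set (ℝ × ℝ))
    have ha : a ∈ convexHull ℝ ({a, b, c} : Set (ℝ × ℝ)) :=
      subset_convexHull ℝ _ (by simp)
    have hb : b ∈ convexHull ℝ ({a, b, c} : Set (ℝ × ℝ)) :=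
      subset_convexHull ℝ _ (by simp)
    have hc : c ∈ convexHull ℝ ({a, b, c} : Set (ℝ × ℝ)) :=
      subset_convexHull ℝ _ (by simp)
    by_cases hst0 : s + t = 0
    · have hs0 : s = 0 := by linarith
      have ht0 : t = 0 := by linarith
      subst hs0 ht0
      simpa using ha
    · have hσ : 0 < s + t := lt_of_le_of_ne (by linarith) (Ne.symm hst0)
      have hq : (s / (s + t)) • b + (t / (s + t)) • c ∈ convexHull ℝ ({a, b, c} : Set (ℝ × ℝ)) :=
        hC hb hc (by positivity) (by positivity) (by field_simp)
      have hw : (1 - (s + t)) • a + (s + t) • ((s / (s + t)) • b + (t / (s + t)) • c) ∈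
          convexHull ℝ ({a, b, c} : Set (ℝ × ℝ)) :=
        hC ha hq (by linarith) (by linarith) (by ring)
      convert hw using 1
      match_scalars
      · ring
      · field_simp
      · field_simp

lemma aux_push (S : Set (ℝ × ℝ)) (w : ℝ × ℝ) (hw : w ∈ interior S) (d : ℝ × ℝ) (hd : d ≠ 0) :
    ∃ θ : ℝ, 0 < θ ∧ w + θ • d ∈ S := by
  rw [mem_interior_iff_mem_nhds, Metric.mem_nhds_iff] at hw
  obtain ⟨ε, hε, hball⟩ := hw
  have hdn : 0 < ‖d‖ := norm_pos_iff.mpr hd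
  refine ⟨ε / (2 * ‖d‖), by positivity, hball ?_⟩
  rw [Metric.mem_ball, dist_eq_norm]
  have : w + (ε / (2 * ‖d‖)) • d - w = (ε / (2 * ‖d‖)) • d := by abel
  rw [this, norm_smul, Real.norm_eq_abs, abs_of_pos (by positivity)]
  have h2 : ε / (2 * ‖d‖) * ‖d‖ = ε / 2 := by field_simp
  rw [h2]
  linarith

lemma aux_cancel (u v : ℝ × ℝ) (hd : u.1 * v.2 - u.2 * v.1 ≠ 0) (s t s' t' : ℝ)
    (h : s • u + t • v = s' • u + t' • v) : s = s' ∧ t = t' := by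
  have h0 : (s - s') • u + (t - t') • v = 0 := by
    rw [sub_smul, sub_smul]; rw [← sub_eq_zero] at h; rw [← h]; abel
  have := aux_ind u v hd _ _ h0
  constructor <;> linarith [this.1, this.2]
theorem triangle_lattice_odd_cover (a b c : ℝ × ℝ)
    (hnd : ¬ Collinear ℝ ({a, b, c} : Set (ℝ × ℝ)))
    (T : Set (ℝ × ℝ)) (hT : T = convexHull ℝ ({a, b, c} : Set (ℝ × ℝ)))
    (Λ : Set (ℝ × ℝ))
    (hΛ : Λ = {z | ∃ m n : ℤ, z = m • ((2 : ℝ)⁻¹ • (b - a)) + n • ((2 : ℝ)⁻¹ • (c - a))})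
    (p : ℝ × ℝ) (hp : ∀ z ∈ Λ, p - z ∉ frontier T) :
    Set.ncard {z | z ∈ Λ ∧ p - z ∈ T} = 1 ∨ Set.ncard {z | z ∈ Λ ∧ p - z ∈ T} = 3 := by
  set u : ℝ × ℝ := (2:ℝ)⁻¹ • (b - a) with hu
  set v : ℝ × ℝ := (2:ℝ)⁻¹ • (c - a) with hv
  have hdet' := aux_det a b c hnd
  have hdet : u.1 * v.2 - u.2 * v.1 ≠ 0 := by
    simp only [hu, hv, Prod.smul_fst, Prod.smul_snd, smul_eq_mul]
    intro h; apply hdet'; linarith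
  have hu0 : u ≠ 0 := by intro h; apply hdet; rw [h]; simp
  have hv0 : v ≠ 0 := by intro h; apply hdet; rw [h]; simp
  have hmemT : ∀ w : ℝ × ℝ, w ∈ T ↔ ∃ s t : ℝ, 0 ≤ s ∧ 0 ≤ t ∧ s + t ≤ 2 ∧
      w = a + s • u + t • v := by
    intro w
    rw [hT, aux_T]
    constructor
    · rintro ⟨s, t, hs, ht, hst, rfl⟩
      exact ⟨2*s, 2*t, by linarith, by linarith, by linarith, by rw [hu, hv]; module⟩
    · rintro ⟨s, t, hs, ht, hst, rfl⟩
      exact ⟨s/2, t/2, by linarith, by linarith, by linarith, by rw [hu, hv]; module⟩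
  have hTclosed : IsClosed T := by
    rw [hT]; exact (Set.Finite.isCompact_convexHull ℝ (Set.toFinite _)).isClosed
  have hΛiff : ∀ z : ℝ × ℝ, z ∈ Λ ↔ ∃ m n : ℤ, z = (m:ℝ) • u + (n:ℝ) • v := by
    intro z
    rw [hΛ]
    simp only [Set.mem_setOf_eq, Int.cast_smul_eq_zsmul]
  have hfr : ∀ s t : ℝ, 0 ≤ s → 0 ≤ t → s + t ≤ 2 → (s = 0 ∨ t = 0 ∨ s + t = 2) →
      a + s • u + t • v ∈ frontier T := by
    intro s t hs ht hst hedge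
    rw [hTclosed.frontier_eq, Set.mem_diff]
    refine ⟨(hmemT _).mpr ⟨s, t, hs, ht, hst, rfl⟩, ?_⟩
    intro hint
    rcases hedge with h0 | h0 | h0
    · obtain ⟨θ, hθ, hmem⟩ := aux_push _ _ hint (-u) (neg_ne_zero.mpr hu0)
      have heq : a + s • u + t • v + θ • (-u) = a + (s - θ) • u + t • v := by module
      rw [heq] at hmem
      obtain ⟨s', t', hs', ht', hst', heq'⟩ := (hmemT _).mp hmem
      rw [add_assoc, add_assoc] at heq'
      obtain ⟨e1, e2⟩ := aux_cancel u v hdet _ _ _ _ (add_left_cancel heq')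
      linarith
    · obtain ⟨θ, hθ, hmem⟩ := aux_push _ _ hint (-v) (neg_ne_zero.mpr hv0)
      have heq : a + s • u + t • v + θ • (-v) = a + s • u + (t - θ) • v := by module
      rw [heq] at hmem
      obtain ⟨s', t', hs', ht', hst', heq'⟩ := (hmemT _).mp hmem
      rw [add_assoc, add_assoc] at heq'
      obtain ⟨e1, e2⟩ := aux_cancel u v hdet _ _ _ _ (add_left_cancel heq')
      linarith
    · obtain ⟨θ, hθ, hmem⟩ := aux_push _ _ hint u hu0
      have heq : a + s • u + t • v + θ • u = a + (s + θ) • u + t • v := by module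
      rw [heq] at hmem
      obtain ⟨s', t', hs', ht', hst', heq'⟩ := (hmemT _).mp hmem
      rw [add_assoc, add_assoc] at heq'
      obtain ⟨e1, e2⟩ := aux_cancel u v hdet _ _ _ _ (add_left_cancel heq')
      linarith
  obtain ⟨x, y, hxy0⟩ := aux_span u v hdet (p - a)
  have hp2 : p = x • u + y • v + a := sub_eq_iff_eq_add.mp hxy0
  have hrep : ∀ m n : ℝ, p - (m • u + n • v) = a + (x - m) • u + (y - n) • v := by
    intro m n; rw [hp2]; module
  have hmem' : ∀ m n : ℤ, (p - ((m:ℝ) • u + (n:ℝ) • v) ∈ T) ↔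
      ((m:ℝ) ≤ x ∧ (n:ℝ) ≤ y ∧ x + y - m - n ≤ 2) := by
    intro m n
    rw [hrep, hmemT]
    constructor
    · rintro ⟨s', t', hs', ht', hst', heq'⟩
      rw [add_assoc, add_assoc] at heq'
      obtain ⟨e1, e2⟩ := aux_cancel u v hdet _ _ _ _ (add_left_cancel heq')
      exact ⟨by linarith, by linarith, by linarith⟩
    · rintro ⟨h1, h2, h3⟩
      exact ⟨x - m, y - n, by linarith, by linarith, by linarith, rfl⟩
  have hΛmem : ∀ m n : ℤ, ((m:ℝ) • u + (n:ℝ) • v) ∈ Λ := fun m n => (hΛiff _).mpr ⟨m, n, rfl⟩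
  set M : ℤ := ⌊x⌋ with hM
  set N : ℤ := ⌊y⌋ with hN
  have hMx : (M:ℝ) ≤ x := Int.floor_le x
  have hMx1 : x < M + 1 := Int.lt_floor_add_one x
  have hNy : (N:ℝ) ≤ y := Int.floor_le y
  have hNy1 : y < N + 1 := Int.lt_floor_add_one y
  have hf0 : (M:ℝ) < x := by
    rcases lt_or_eq_of_le hMx with h | h
    · exact h
    · exfalso
      apply hp _ (hΛmem M N)
      rw [hrep]
      have hs0 : x - (M:ℝ) = 0 := by linarith
      rw [hs0]
      exact hfr 0 (y - N) le_rfl (by linarith) (by linarith) (Or.inl rfl)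
  have hg0 : (N:ℝ) < y := by
    rcases lt_or_eq_of_le hNy with h | h
    · exact h
    · exfalso
      apply hp _ (hΛmem M N)
      rw [hrep]
      have ht0 : y - (N:ℝ) = 0 := by linarith
      rw [ht0]
      exact hfr (x - M) 0 (by linarith) le_rfl (by linarith) (Or.inr (Or.inl rfl))
  have hfg : x + y - M - N ≠ 1 := by
    intro h1
    apply hp _ (hΛmem M (N - 1))
    rw [hrep]
    have hcast : y - ((N - 1 : ℤ):ℝ) = y - N + 1 := by push_cast; ring
    rw [hcast]
    exact hfr (x - M) (y - N + 1) (by linarith) (by linarith) (by linarith)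
      (Or.inr (Or.inr (by linarith)))
  have hS : ∀ z : ℝ × ℝ, z ∈ {z | z ∈ Λ ∧ p - z ∈ T} ↔
      ∃ m n : ℤ, z = (m:ℝ) • u + (n:ℝ) • v ∧ (m:ℝ) ≤ x ∧ (n:ℝ) ≤ y ∧ x + y - m - n ≤ 2 := by
    intro z
    simp only [Set.mem_setOf_eq]
    constructor
    · rintro ⟨hzΛ, hzT⟩
      obtain ⟨m, n, rfl⟩ := (hΛiff z).mp hzΛ
      obtain ⟨h1, h2, h3⟩ := (hmem' m n).mp hzT
      exact ⟨m, n, rfl, h1, h2, h3⟩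
    · rintro ⟨m, n, rfl, h1, h2, h3⟩
      exact ⟨hΛmem m n, (hmem' m n).mpr ⟨h1, h2, h3⟩⟩
  have hinj : ∀ m n m' n' : ℤ, (m:ℝ) • u + (n:ℝ) • v = (m':ℝ) • u + (n':ℝ) • v →
      m = m' ∧ n = n' := by
    intro m n m' n' h
    obtain ⟨e1, e2⟩ := aux_cancel u v hdet _ _ _ _ h
    exact ⟨by exact_mod_cast e1, by exact_mod_cast e2⟩
  rcases Ne.lt_or_gt hfg with hcase | hcase
  · right
    rw [Set.ncard_eq_three]
    refine ⟨(M:ℝ) • u + (N:ℝ) • v, ((M-1:ℤ):ℝ) • u + (N:ℝ) • v, (M:ℝ) • u + ((N-1:ℤ):ℝ) • v,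
      ?_, ?_, ?_, ?_⟩
    · intro h; have := (hinj _ _ _ _ h).1; omega
    · intro h; have := (hinj _ _ _ _ h).2; omega
    · intro h; have := (hinj _ _ _ _ h).1; omega
    · ext z
      rw [hS]
      constructor
      · rintro ⟨m, n, rfl, h1, h2, h3⟩
        have hm : m ≤ M := Int.le_floor.mpr h1
        have hn : n ≤ N := Int.le_floor.mpr h2
        have hmn : M + N - 1 ≤ m + n := by
          have hr : ((M + N - 2 : ℤ):ℝ) < (m:ℝ) + (n:ℝ) := by push_cast; linarith
          have hr2 : (M + N - 2 : ℤ) < m + n := by exact_mod_cast hr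
          omega
        have hc : (m = M ∧ n = N) ∨ (m = M - 1 ∧ n = N) ∨ (m = M ∧ n = N - 1) := by omega
        rcases hc with ⟨rfl, rfl⟩ | ⟨rfl, rfl⟩ | ⟨rfl, rfl⟩
        · exact Set.mem_insert _ _
        · exact Set.mem_insert_of_mem _ (Set.mem_insert _ _)
        · exact Set.mem_insert_of_mem _ (Set.mem_insert_of_mem _ rfl)
      · rintro (rfl | rfl | rfl)
        · exact ⟨M, N, rfl, hMx, hNy, by linarith⟩
        · refine ⟨M - 1, N, rfl, ?_, hNy, ?_⟩ <;> push_cast <;> linarith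
        · refine ⟨M, N - 1, rfl, hMx, ?_, ?_⟩ <;> push_cast <;> linarith
  · left
    rw [Set.ncard_eq_one]
    refine ⟨(M:ℝ) • u + (N:ℝ) • v, ?_⟩
    ext z
    rw [hS, Set.mem_singleton_iff]
    constructor
    · rintro ⟨m, n, rfl, h1, h2, h3⟩
      have hm : m ≤ M := Int.le_floor.mpr h1
      have hn : n ≤ N := Int.le_floor.mpr h2
      have hmn : M + N ≤ m + n := by
        have hr : ((M + N - 1 : ℤ):ℝ) < (m:ℝ) + (n:ℝ) := by push_cast; linarith
        have hr2 : (M + N - 1 : ℤ) < m + n := by exact_mod_cast hr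
        omega
      obtain rfl : m = M := by omega
      obtain rfl : n = N := by omega
      rfl
    · rintro rfl
      exact ⟨M, N, rfl, hMx, hNy, by linarith⟩
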